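/- arXiv:2105.02110 — 5 statements merged into one kernel-verified Lean document; each statement's English description precedes it below -/
import Mathlib

section
/- Let A be a real symmetric n×n matrix with all entries nonnegative. Then -A has a ground state (eigenvector for its minimal eigenvalue) whose entries are all nonnegative. -/
/-- Perron–Frobenius property: a real symmetric entrywise-nonnegative matrix `A`
is such that `-A` has a ground state (eigenvector of minimal eigenvalue of `-A`)
with all entries nonnegative. -/
theorem stmt0 (n : ℕ) (hn : 0 < n) (A : Matrix (Fin n) (Fin n) ℝ)
    (hsymm : A.IsSymm) (hpos : ∀ i j, 0 ≤ A i j) :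
    ∃ (μ : ℝ) (v : Fin n → ℝ), v ≠ 0 ∧ (∀ i, 0 ≤ v i) ∧
      (-A).mulVec v = μ • v ∧
      ∀ (μ' : ℝ) (w : Fin n → ℝ), w ≠ 0 → (-A).mulVec w = μ' • w → μ ≤ μ' := by
  classical
  set E := EuclideanSpace ℝ (Fin n) with hE
  let T : E →L[ℝ] E := LinearMap.toContinuousLinearMap (Matrix.toEuclideanLin A)
  have hherm : A.IsHermitian := by
    rwa [Matrix.IsHermitian, Matrix.conjTranspose_eq_transpose_of_trivial]
  have hTsymm : LinearMap.IsSymmetric (T : E →ₗ[ℝ] E) :=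
    Matrix.isHermitian_iff_isSymmetric.mp hherm
  have hT : IsSelfAdjoint T := hTsymm.isSelfAdjoint
  -- formula for the Rayleigh numerator
  have hf : ∀ x : E, T.reApplyInnerSelf x =
      ∑ i, (∑ j, A i j * x j) * x i := by
    intro x
    rw [ContinuousLinearMap.reApplyInnerSelf_apply]
    show (inner ℝ (T x) x : ℝ) = _
    rw [PiLp.inner_apply]
    refine Finset.sum_congr rfl fun i _ => ?_
    rw [mul_comm]
    rfl
  -- taking absolute values can only increase the Rayleigh numerator
  have habs : ∀ x : E, T.reApplyInnerSelf x ≤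
      T.reApplyInnerSelf (WithLp.toLp 2 (fun i => |x i| : Fin n → ℝ) : E) := by
    intro x
    rw [hf, hf]
    simp only [Finset.sum_mul]
    refine Finset.sum_le_sum fun i _ => Finset.sum_le_sum fun j _ => ?_
    show A i j * x j * x i ≤ A i j * |x j| * |x i|
    calc A i j * x j * x i ≤ |A i j * x j * x i| := le_abs_self _
      _ = A i j * |x j| * |x i| := by
          rw [abs_mul, abs_mul, abs_of_nonneg (hpos i j)]
  -- the sphere is compact and nonempty
  have hsphere : (Metric.sphere (0 : E) 1).Nonempty := by
    refine ⟨EuclideanSpace.single ⟨0, hn⟩ (1 : ℝ), ?_⟩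
    simp only [Metric.mem_sphere, dist_zero_right]
    rw [EuclideanSpace.norm_single]; norm_num
  obtain ⟨x₀, hx₀mem, hx₀max⟩ :=
    (isCompact_sphere (0 : E) 1).exists_isMaxOn hsphere
      T.reApplyInnerSelf_continuous.continuousOn
  have hx₀norm : ‖x₀‖ = 1 := by simpa using hx₀mem
  -- the entrywise absolute value of x₀
  set y : E := (WithLp.toLp 2 (fun i => |x₀ i| : Fin n → ℝ) : E) with hy
  have hynorm : ‖y‖ = ‖x₀‖ := by
    rw [EuclideanSpace.norm_eq, EuclideanSpace.norm_eq]
    congr 1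
    refine Finset.sum_congr rfl fun i _ => ?_
    show ‖|x₀ i|‖ ^ 2 = ‖x₀ i‖ ^ 2
    rw [Real.norm_eq_abs, Real.norm_eq_abs, abs_abs]
  have hynorm1 : ‖y‖ = 1 := hynorm.trans hx₀norm
  have hy0 : y ≠ 0 := by
    intro h; rw [h, norm_zero] at hynorm1; exact one_ne_zero hynorm1.symm
  have hymem : y ∈ Metric.sphere (0 : E) 1 := by simp [hynorm1]
  have hfy : T.reApplyInnerSelf x₀ ≤ T.reApplyInnerSelf y := habs x₀
  -- y is also a maximum point on the sphere
  have hymax : IsMaxOn T.reApplyInnerSelf (Metric.sphere (0 : E) ‖y‖) y := by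
    rw [hynorm1]
    intro z hz
    exact le_trans (hx₀max hz) hfy
  obtain ⟨hmem, -⟩ := hT.hasEigenvector_of_isMaxOn hy0 hymax
  rw [Module.End.mem_eigenspace_iff] at hmem
  set c : ℝ := ⨆ x : { x : E // x ≠ 0 }, T.rayleighQuotient x with hc
  -- from the eigenvector equation in E, get the matrix equation
  have hAv : A.mulVec (fun i => |x₀ i|) = c • (fun i => |x₀ i|) := by
    funext i
    have := congrArg (fun v : E => v i) hmem
    exact this
  -- the eigenvalue c equals the Rayleigh value at y
  have hfyc : T.reApplyInnerSelf y = c := by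
    rw [hf]
    have : ∀ i, (∑ j, A i j * y j) = c * y i := by
      intro i
      have := congrFun hAv i
      simpa [Matrix.mulVec, dotProduct, hy] using this
    calc ∑ i, (∑ j, A i j * y j) * y i = ∑ i, (c * y i) * y i := by
          refine Finset.sum_congr rfl fun i _ => ?_; rw [this i]
      _ = c * ∑ i, y i * y i := by
          rw [Finset.mul_sum]
          exact Finset.sum_congr rfl fun i _ => mul_assoc c (y i) (y i)
      _ = c * 1 := by
          congr 1
          have h2 : ‖y‖ ^ 2 = 1 := by rw [hynorm1]; norm_num
          rw [EuclideanSpace.norm_eq] at h2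
          rw [Real.sq_sqrt (by positivity)] at h2
          rw [← h2]
          refine Finset.sum_congr rfl fun i _ => ?_
          show y i * y i = ‖y i‖ ^ 2
          rw [Real.norm_eq_abs, sq_abs, sq]
      _ = c := mul_one c
  refine ⟨-c, fun i => |x₀ i|, ?_, fun i => abs_nonneg _, ?_, ?_⟩
  · intro h
    exact hy0 (by rw [hy, h, WithLp.toLp_zero])
  · rw [Matrix.neg_mulVec, hAv, neg_smul]
  · -- minimality
    intro μ' w hw hμ'
    have hAw : A.mulVec w = (-μ') • w := by
      have := congrArg Neg.neg hμ'
      rw [Matrix.neg_mulVec, neg_neg] at this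
      rw [this, neg_smul]
    -- view w as an element of E, normalized
    set u : E := (WithLp.toLp 2 (w : Fin n → ℝ) : E) with hu
    have hu0 : u ≠ 0 := by
      intro h
      apply hw
      funext i
      exact congrArg (fun v : E => v i) h
    have hunorm : 0 < ‖u‖ := norm_pos_iff.mpr hu0
    set u' : E := (‖u‖⁻¹ : ℝ) • u with hu'
    have hu'norm : ‖u'‖ = 1 := by
      rw [hu', norm_smul, norm_inv, norm_norm, inv_mul_cancel₀ hunorm.ne']
    have hu'mem : u' ∈ Metric.sphere (0 : E) 1 := by simp [hu'norm]
    -- Rayleigh value at u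
    have hfu : T.reApplyInnerSelf u = (-μ') * ‖u‖ ^ 2 := by
      rw [hf]
      have hTu : ∀ i, (∑ j, A i j * u j) = (-μ') * u i := by
        intro i
        have := congrFun hAw i
        simpa [Matrix.mulVec, dotProduct, hu] using this
      calc ∑ i, (∑ j, A i j * u j) * u i = ∑ i, ((-μ') * u i) * u i := by
            refine Finset.sum_congr rfl fun i _ => ?_; rw [hTu i]
        _ = (-μ') * ∑ i, u i * u i := by
            rw [Finset.mul_sum]
            exact Finset.sum_congr rfl fun i _ => mul_assoc (-μ') (u i) (u i)
        _ = (-μ') * ‖u‖ ^ 2 := by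
            congr 1
            rw [EuclideanSpace.norm_eq, Real.sq_sqrt (by positivity)]
            refine Finset.sum_congr rfl fun i _ => ?_
            show u i * u i = ‖u i‖ ^ 2
            rw [Real.norm_eq_abs, sq_abs, sq]
    have hfu' : T.reApplyInnerSelf u' = -μ' := by
      rw [hu', T.reApplyInnerSelf_smul, hfu]
      have : ‖(‖u‖⁻¹ : ℝ)‖ ^ 2 = (‖u‖ ^ 2)⁻¹ := by
        rw [norm_inv, norm_norm, inv_pow]
      rw [this]
      field_simp
    have : T.reApplyInnerSelf u' ≤ c := by
      rw [← hfyc]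
      exact le_trans (hx₀max hu'mem) hfy
    rw [hfu'] at this
    linarith
end

section
/- Let A be a real symmetric n×n matrix such that there exists k₀ > 0 with A^k entrywise nonnegative for all k > k₀ (A is eventually nonnegative). Then -A has a ground state with all entries nonnegative. -/
open Matrix Finset InnerProductSpace

private lemma pow_mulVec_eig {n : ℕ} (A : Matrix (Fin n) (Fin n) ℝ) (hA : A.IsHermitian)
    (k : ℕ) (j : Fin n) :
    (A ^ k) *ᵥ ⇑(hA.eigenvectorBasis j) = (hA.eigenvalues j ^ k) • ⇑(hA.eigenvectorBasis j) := by
  induction k with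
  | zero => simp [Matrix.one_mulVec]
  | succ k ih =>
    rw [pow_succ', ← Matrix.mulVec_mulVec, ih, Matrix.mulVec_smul, hA.mulVec_eigenvectorBasis,
      pow_succ', smul_smul, mul_comm]

private lemma expand_quad {n : ℕ} (A : Matrix (Fin n) (Fin n) ℝ) (hA : A.IsHermitian) (k : ℕ)
    (x : EuclideanSpace ℝ (Fin n)) :
    dotProduct x ((A ^ k) *ᵥ x) =
      ∑ i, ⟪hA.eigenvectorBasis i, x⟫_ℝ ^ 2 * hA.eigenvalues i ^ k := by
  set b := hA.eigenvectorBasis with hbdef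
  set ev := hA.eigenvalues with hevdef
  set c : Fin n → ℝ := fun i => ⟪b i, x⟫_ℝ with hcdef
  have hx : ∑ i, c i • b i = x := b.sum_repr' x
  have hsa : ∀ (f : Fin n → EuclideanSpace ℝ (Fin n)) (l : Fin n),
      (∑ i, f i) l = ∑ i, f i l := fun f l => by simp
  have hinner : ∀ i, c i = ∑ j, b i j * x j := by
    intro i
    simp [hcdef, PiLp.inner_apply, RCLike.inner_apply, conj_trivial]
    exact Finset.sum_congr rfl fun _ _ => mul_comm _ _
  have key : (A ^ k) *ᵥ x = fun j => ∑ i, c i * ev i ^ k * b i j := by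
    conv_lhs => rw [← hx]
    funext j
    simp only [Matrix.mulVec, dotProduct]
    simp only [hsa]
    have hterm : ∀ l i, (A ^ k) j l * (c i • b i) l = (A ^ k) j l * (c i * b i l) := by
      intro l i; rfl
    simp only [Finset.mul_sum, hterm]
    rw [Finset.sum_comm]
    refine Finset.sum_congr rfl fun i _ => ?_
    have h2 := congrFun (pow_mulVec_eig A hA k i) j
    simp only [Matrix.mulVec, dotProduct, Pi.smul_apply, smul_eq_mul] at h2
    calc ∑ l, (A ^ k) j l * (c i * b i l)
        = c i * ∑ l, (A ^ k) j l * b i l := by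
          rw [Finset.mul_sum]; exact Finset.sum_congr rfl fun l _ => by ring
      _ = c i * ev i ^ k * b i j := by
          have h2' : ∑ l, (A ^ k) j l * b i l = ev i ^ k * b i j := h2
          rw [h2']; ring
  rw [key]
  simp only [dotProduct, Finset.mul_sum]
  rw [Finset.sum_comm]
  refine Finset.sum_congr rfl fun i _ => ?_
  calc ∑ j, x j * (c i * ev i ^ k * b i j)
      = (c i * ev i ^ k) * ∑ j, b i j * x j := by
        rw [Finset.mul_sum]; exact Finset.sum_congr rfl fun j _ => by ring
    _ = c i ^ 2 * ev i ^ k := by rw [← hinner i]; ring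

/-- If a real symmetric matrix `A` is eventually (entrywise) nonnegative, then
`-A` has a ground state with all entries nonnegative. -/
theorem stmt1 (n : ℕ) (hn : 0 < n) (A : Matrix (Fin n) (Fin n) ℝ)
    (hsymm : A.IsSymm)
    (hev : ∃ k₀ : ℕ, 0 < k₀ ∧ ∀ k, k₀ < k → ∀ i j, 0 ≤ (A ^ k) i j) :
    ∃ (μ : ℝ) (v : Fin n → ℝ), v ≠ 0 ∧ (∀ i, 0 ≤ v i) ∧
      (-A).mulVec v = μ • v ∧
      ∀ (μ' : ℝ) (w : Fin n → ℝ), w ≠ 0 → (-A).mulVec w = μ' • w → μ ≤ μ' := by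
  obtain ⟨k₀, hk₀pos, hpos⟩ := hev
  have hA : A.IsHermitian := by
    rwa [Matrix.IsHermitian, conjTranspose, Matrix.IsSymm] at *
  haveI : Nonempty (Fin n) := ⟨⟨0, hn⟩⟩
  obtain ⟨i₀, hi₀⟩ := Finite.exists_max hA.eigenvalues
  set b := hA.eigenvectorBasis with hbdef
  set ev := hA.eigenvalues with hevdef
  set lam := ev i₀ with hlamdef
  set v : EuclideanSpace ℝ (Fin n) := b i₀ with hvdef
  set u : EuclideanSpace ℝ (Fin n) := WithLp.toLp 2 (fun j => |v j|) with hudef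
  set c : Fin n → ℝ := fun i => ⟪b i, u⟫_ℝ with hcdef
  set k := 2 * k₀ + 1 with hkdef
  have hodd : Odd k := ⟨k₀, by omega⟩
  have hkk : k₀ < k := by omega
  have hApos : ∀ i j, 0 ≤ (A ^ k) i j := hpos k hkk
  have hv0 : v ≠ 0 := hA.eigenvectorBasis.orthonormal.ne_zero i₀
  have hu0 : (u : Fin n → ℝ) ≠ 0 := by
    intro h
    apply hv0
    ext j
    have := congrFun h j
    simpa [hudef, abs_eq_zero] using this
  have hvk : A ^ k *ᵥ v = lam ^ k • (v : Fin n → ℝ) := pow_mulVec_eig A hA k i₀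
  have huu : dotProduct (u : Fin n → ℝ) u = dotProduct (v : Fin n → ℝ) v := by
    refine Finset.sum_congr rfl fun j _ => ?_
    show |v j| * |v j| = v j * v j
    exact abs_mul_abs_self _
  have h1 : dotProduct (v : Fin n → ℝ) (A ^ k *ᵥ v) =
      lam ^ k * dotProduct (v : Fin n → ℝ) v := by
    rw [hvk, dotProduct_smul, smul_eq_mul]
  have h2 : dotProduct (v : Fin n → ℝ) (A ^ k *ᵥ v) ≤
      dotProduct (u : Fin n → ℝ) (A ^ k *ᵥ u) := by
    simp only [dotProduct, Matrix.mulVec, Finset.mul_sum]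
    refine Finset.sum_le_sum fun j _ => Finset.sum_le_sum fun l _ => ?_
    have hul : (u : Fin n → ℝ) l = |v l| := rfl
    have huj : (u : Fin n → ℝ) j = |v j| := rfl
    calc v j * ((A ^ k) j l * v l) ≤ |v j * ((A ^ k) j l * v l)| := le_abs_self _
      _ = u j * ((A ^ k) j l * u l) := by
          rw [huj, hul, abs_mul, abs_mul, abs_of_nonneg (hApos j l)]
          try ring
  have h3 : dotProduct (u : Fin n → ℝ) (A ^ k *ᵥ u) = ∑ i, c i ^ 2 * ev i ^ k :=
    expand_quad A hA k u
  have h0 : dotProduct (u : Fin n → ℝ) u = ∑ i, c i ^ 2 := by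
    have := expand_quad A hA 0 u
    simpa [Matrix.one_mulVec] using this
  have h4 : ∀ i ∈ Finset.univ, c i ^ 2 * ev i ^ k ≤ c i ^ 2 * lam ^ k := fun i _ =>
    mul_le_mul_of_nonneg_left ((hodd.strictMono_pow.monotone) (hi₀ i)) (sq_nonneg _)
  have h5 : ∑ i, c i ^ 2 * lam ^ k = lam ^ k * dotProduct (v : Fin n → ℝ) v := by
    rw [← huu, h0, Finset.mul_sum]
    exact Finset.sum_congr rfl fun i _ => by ring
  have heq : ∑ i, c i ^ 2 * lam ^ k = ∑ i, c i ^ 2 * ev i ^ k := by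
    have hle := Finset.sum_le_sum h4
    linarith [h1, h2, h3, h5, hle]
  have hterm := (Finset.sum_eq_sum_iff_of_le h4).mp heq.symm
  have hkey : ∀ i, c i ≠ 0 → ev i = lam := by
    intro i hci
    have h := hterm i (Finset.mem_univ i)
    have hc2 : c i ^ 2 ≠ 0 := pow_ne_zero _ hci
    have hpow : ev i ^ k = lam ^ k := mul_left_cancel₀ hc2 h
    rcases lt_or_eq_of_le (hi₀ i) with hlt | hE
    · exact absurd hpow (ne_of_lt (hodd.strictMono_pow hlt))
    · exact hE
  -- eigen-equation for u
  have hAu : A *ᵥ (u : Fin n → ℝ) = lam • (u : Fin n → ℝ) := by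
    have e1 : dotProduct (u : Fin n → ℝ) (A *ᵥ u) = ∑ i, c i ^ 2 * ev i := by
      have := expand_quad A hA 1 u
      simpa using this
    have e2 : dotProduct (u : Fin n → ℝ) (A ^ 2 *ᵥ u) = ∑ i, c i ^ 2 * ev i ^ 2 :=
      expand_quad A hA 2 u
    have e3 : dotProduct (A *ᵥ (u : Fin n → ℝ)) (A *ᵥ u) =
        dotProduct (u : Fin n → ℝ) (A ^ 2 *ᵥ u) := by
      rw [pow_two, ← Matrix.mulVec_mulVec, dotProduct_mulVec (u : Fin n → ℝ) A,
        ← Matrix.mulVec_transpose, hsymm.eq]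
    have hz : ∑ j, ((A *ᵥ (u : Fin n → ℝ)) j - lam * u j) ^ 2 = 0 := by
      have expandsq : ∑ j, ((A *ᵥ (u : Fin n → ℝ)) j - lam * u j) ^ 2 =
          dotProduct (A *ᵥ (u : Fin n → ℝ)) (A *ᵥ u) -
            2 * lam * dotProduct (u : Fin n → ℝ) (A *ᵥ u) +
            lam ^ 2 * dotProduct (u : Fin n → ℝ) u := by
        simp only [dotProduct, Finset.mul_sum, ← Finset.sum_sub_distrib,
          ← Finset.sum_add_distrib]
        exact Finset.sum_congr rfl fun j _ => by ring
      rw [expandsq, e3, e2, e1, h0, Finset.mul_sum, Finset.mul_sum,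
        ← Finset.sum_sub_distrib, ← Finset.sum_add_distrib]
      refine Finset.sum_eq_zero fun i _ => ?_
      by_cases hci : c i = 0
      · simp [hci]
      · rw [hkey i hci]; ring
    funext j
    have hj := (Finset.sum_eq_zero_iff_of_nonneg (fun j _ => sq_nonneg _)).mp hz j
      (Finset.mem_univ j)
    have hj2 : (A *ᵥ (u : Fin n → ℝ)) j - lam * u j = 0 := by
      exact sq_eq_zero_iff.mp hj
    show (A *ᵥ (u : Fin n → ℝ)) j = lam * u j
    linarith [hj2]
  refine ⟨-lam, u, hu0, fun i => abs_nonneg _, ?_, ?_⟩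
  · rw [Matrix.neg_mulVec, hAu, neg_smul]
  · intro μ' w hw hμw
    have hAw : A *ᵥ w = (-μ') • w := by
      rw [Matrix.neg_mulVec] at hμw
      funext j
      have := congrFun hμw j
      simp only [Pi.neg_apply, Pi.smul_apply, smul_eq_mul] at this ⊢
      linarith
    set d : Fin n → ℝ := fun i => ⟪b i, WithLp.toLp 2 w⟫_ℝ with hddef
    have e1 : dotProduct w (A *ᵥ w) = ∑ i, d i ^ 2 * ev i := by
      have := expand_quad A hA 1 (WithLp.toLp 2 w)
      simpa using this
    have e0 : dotProduct w w = ∑ i, d i ^ 2 := by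
      have := expand_quad A hA 0 (WithLp.toLp 2 w)
      simpa [Matrix.one_mulVec] using this
    have hww : 0 < dotProduct w w := by
      have hne : dotProduct w w ≠ 0 := fun h => hw (dotProduct_self_eq_zero.mp h)
      have hnn : 0 ≤ dotProduct w w := Finset.sum_nonneg fun j _ => mul_self_nonneg _
      exact hnn.lt_of_ne (Ne.symm hne)
    have e2 : dotProduct w (A *ᵥ w) = -μ' * dotProduct w w := by
      rw [hAw, dotProduct_smul, smul_eq_mul]
    have hle : ∑ i, d i ^ 2 * ev i ≤ ∑ i, d i ^ 2 * lam :=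
      Finset.sum_le_sum fun i _ => mul_le_mul_of_nonneg_left (hi₀ i) (sq_nonneg _)
    have hsum : ∑ i, d i ^ 2 * lam = lam * dotProduct w w := by
      rw [e0, Finset.mul_sum]
      exact Finset.sum_congr rfl fun i _ => by ring
    have hfin : -μ' * dotProduct w w ≤ lam * dotProduct w w := by
      rw [← e2, ← hsum, e1]
      exact hle
    have : -μ' ≤ lam := (mul_le_mul_iff_of_pos_right hww).mp hfin
    linarith
end

section
/- Let G be a finite undirected graph with positive rational vertex weights w, and suppose λ_{ij} ≥ min(w_i, w_j) for every edge ij. Then the maximum over all x ∈ {0,1}^V of Y(x) = Σ_i w_i x_i − Σ_{ij ∈ E} λ_{ij} x_i x_j equals the maximum total weight of an independent set in G. -/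
open Finset

section Aux

variable {V : Type*} [Fintype V] [DecidableEq V]
  (G : SimpleGraph V) [DecidableRel G.Adj]
  (w : V → ℚ) (lam : V → V → ℚ)

/-- The edge-penalty term of the QUBO objective. -/
def qedge (hsym : ∀ i j, lam i j = lam j i) (x : V → Bool) : Sym2 V → ℚ :=
  Sym2.lift ⟨fun i j => lam i j * (if x i then 1 else 0) * (if x j then 1 else 0),
    fun i j => by simp only [hsym i j]; ring⟩

lemma qedge_nonneg (hsym : ∀ i j, lam i j = lam j i) (hw : ∀ i, 0 < w i)
    (hlam : ∀ i j, G.Adj i j → min (w i) (w j) ≤ lam i j)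
    (x : V → Bool) {e : Sym2 V} (he : e ∈ G.edgeFinset) :
    0 ≤ qedge lam hsym x e := by
  induction e using Sym2.ind with
  | _ a b =>
    rw [SimpleGraph.mem_edgeFinset, SimpleGraph.mem_edgeSet] at he
    have h0 : (0:ℚ) ≤ lam a b := ((lt_min (hw a) (hw b)).le).trans (hlam a b he)
    have h1 : (0:ℚ) ≤ if x a then 1 else 0 := by split <;> norm_num
    have h2 : (0:ℚ) ≤ if x b then 1 else 0 := by split <;> norm_num
    simpa [qedge] using mul_nonneg (mul_nonneg h0 h1) h2

lemma qedge_mono (hsym : ∀ i j, lam i j = lam j i) (hw : ∀ i, 0 < w i)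
    (hlam : ∀ i j, G.Adj i j → min (w i) (w j) ≤ lam i j)
    (x x' : V → Bool) (hxx : ∀ k, x' k = true → x k = true)
    {e : Sym2 V} (he : e ∈ G.edgeFinset) :
    qedge lam hsym x' e ≤ qedge lam hsym x e := by
  induction e using Sym2.ind with
  | _ a b =>
    by_cases ha : x' a = true
    · by_cases hb : x' b = true
      · simp [qedge, ha, hb, hxx a ha, hxx b hb]
      · have : qedge lam hsym x' s(a, b) = 0 := by
          simp [qedge, show x' b = false from Bool.not_eq_true _ |>.mp hb]
        rw [this]; exact qedge_nonneg G w lam hsym hw hlam x he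
    · have : qedge lam hsym x' s(a, b) = 0 := by
        simp [qedge, show x' a = false from Bool.not_eq_true _ |>.mp ha]
      rw [this]; exact qedge_nonneg G w lam hsym hw hlam x he

end Aux

set_option linter.unusedSectionVars false

section Aux2

variable {V : Type*} [Fintype V] [DecidableEq V]
  (G : SimpleGraph V) [DecidableRel G.Adj]
  (w : V → ℚ) (lam : V → V → ℚ)

/-- If the support of `x` is independent, `Y x` equals the weight of the support. -/
lemma Y_eval_indep (hsym : ∀ i j, lam i j = lam j i)
    (x : V → Bool)
    (hind : ∀ a ∈ univ.filter (fun i => x i = true), ∀ b ∈ univ.filter (fun i => x i = true),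
      ¬ G.Adj a b) :
    (∑ i, w i * (if x i then 1 else 0)) - ∑ e ∈ G.edgeFinset, qedge lam hsym x e
      = ∑ i ∈ univ.filter (fun i => x i = true), w i := by
  have hP : ∑ e ∈ G.edgeFinset, qedge lam hsym x e = 0 := by
    refine Finset.sum_eq_zero ?_
    intro e he
    induction e using Sym2.ind with
    | _ a b =>
      rw [SimpleGraph.mem_edgeFinset, SimpleGraph.mem_edgeSet] at he
      by_cases ha : x a = true
      · by_cases hb : x b = true
        · exact absurd he (hind a (by simp [ha]) b (by simp [hb]))
        · simp [qedge, show x b = false from Bool.not_eq_true _ |>.mp hb]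
      · simp [qedge, show x a = false from Bool.not_eq_true _ |>.mp ha]
  rw [hP, sub_zero, Finset.sum_filter]
  exact Finset.sum_congr rfl fun i _ => by by_cases h : x i = true <;> simp [h]

/-- Flipping the lighter endpoint of a violated edge to `false` does not decrease `Y`. -/
lemma Y_flip (hsym : ∀ i j, lam i j = lam j i) (hw : ∀ i, 0 < w i)
    (hlam : ∀ i j, G.Adj i j → min (w i) (w j) ≤ lam i j)
    (x : V → Bool) (i j : V) (hij : G.Adj i j)
    (hxi : x i = true) (hxj : x j = true) (hwij : w i ≤ w j) :
    (∑ k, w k * (if x k then 1 else 0)) - ∑ e ∈ G.edgeFinset, qedge lam hsym x e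
      ≤ (∑ k, w k * (if (fun k => if k = i then false else x k) k then 1 else 0))
        - ∑ e ∈ G.edgeFinset, qedge lam hsym (fun k => if k = i then false else x k) e := by
  set x' : V → Bool := fun k => if k = i then false else x k with hx'
  have hxx : ∀ k, x' k = true → x k = true := by
    intro k hk
    by_cases h : k = i <;> simpa [hx', h] using hk
  -- linear part
  have hL : (∑ k, w k * (if x k then 1 else 0))
      = (∑ k, w k * (if x' k then 1 else 0)) + w i := by
    have : ∀ k, w k * (if x k then 1 else 0)
        = w k * (if x' k then 1 else 0) + (if k = i then w i else 0) := by
      intro k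
      by_cases h : k = i
      · subst h; simp [hx', hxi]
      · simp [hx', h]
    rw [Finset.sum_congr rfl (fun k _ => this k), Finset.sum_add_distrib,
      Finset.sum_ite_eq' univ i (fun _ => w i)]
    simp
  -- penalty part
  have hne : i ≠ j := G.ne_of_adj hij
  have he0 : s(i, j) ∈ G.edgeFinset := by
    rw [SimpleGraph.mem_edgeFinset, SimpleGraph.mem_edgeSet]; exact hij
  have hP : (∑ e ∈ G.edgeFinset, qedge lam hsym x' e) + lam i j
      ≤ ∑ e ∈ G.edgeFinset, qedge lam hsym x e := by
    rw [← Finset.add_sum_erase _ _ he0, ← Finset.add_sum_erase _ _ he0]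
    have h1 : qedge lam hsym x s(i, j) = lam i j := by simp [qedge, hxi, hxj]
    have h2 : qedge lam hsym x' s(i, j) = 0 := by simp [qedge, hx']
    have h3 : ∑ e ∈ G.edgeFinset.erase s(i, j), qedge lam hsym x' e
        ≤ ∑ e ∈ G.edgeFinset.erase s(i, j), qedge lam hsym x e :=
      Finset.sum_le_sum fun e he =>
        qedge_mono G w lam hsym hw hlam x x' hxx (Finset.mem_of_mem_erase he)
    rw [h1, h2]
    linarith
  have hmin : w i ≤ lam i j := by
    have := hlam i j hij
    rwa [min_eq_left hwij] at this
  linarith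

end Aux2

section Aux3

variable {V : Type*} [Fintype V] [DecidableEq V]
  (G : SimpleGraph V) [DecidableRel G.Adj]
  (w : V → ℚ) (lam : V → V → ℚ)

lemma Y_repair (hsym : ∀ i j, lam i j = lam j i) (hw : ∀ i, 0 < w i)
    (hlam : ∀ i j, G.Adj i j → min (w i) (w j) ≤ lam i j) :
    ∀ n : ℕ, ∀ x : V → Bool, (univ.filter (fun i => x i = true)).card = n →
    ∃ S : Finset V, (∀ a ∈ S, ∀ b ∈ S, ¬ G.Adj a b) ∧
      (∑ k, w k * (if x k then 1 else 0)) - ∑ e ∈ G.edgeFinset, qedge lam hsym x e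
        ≤ ∑ i ∈ S, w i := by
  intro n
  induction n using Nat.strong_induction_on with
  | _ n ih =>
    intro x hn
    by_cases hind : ∀ a ∈ univ.filter (fun i => x i = true),
        ∀ b ∈ univ.filter (fun i => x i = true), ¬ G.Adj a b
    · exact ⟨univ.filter (fun i => x i = true), hind,
        le_of_eq (Y_eval_indep G w lam hsym x hind)⟩
    · push_neg at hind
      obtain ⟨a, ha, b, hb, hab⟩ := hind
      simp only [Finset.mem_filter, Finset.mem_univ, true_and] at ha hb
      -- pick the lighter endpoint
      rcases le_total (w a) (w b) with hwab | hwab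
      · set x' : V → Bool := fun k => if k = a then false else x k with hx'
        have hstep := Y_flip G w lam hsym hw hlam x a b hab ha hb hwab
        have hcard : (univ.filter (fun i => x' i = true)).card < n := by
          rw [← hn]
          refine Finset.card_lt_card ?_
          constructor
          · intro k hk
            simp only [Finset.mem_filter, Finset.mem_univ, true_and] at hk ⊢
            by_cases h : k = a <;> simpa [hx', h] using hk
          · intro hsub
            have := hsub (Finset.mem_filter.mpr ⟨Finset.mem_univ a, ha⟩)
            simp [hx'] at this
        obtain ⟨S, hS, hle⟩ := ih _ hcard x' rfl
        exact ⟨S, hS, hstep.trans hle⟩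
      · set x' : V → Bool := fun k => if k = b then false else x k with hx'
        have hstep := Y_flip G w lam hsym hw hlam x b a hab.symm hb ha hwab
        have hcard : (univ.filter (fun i => x' i = true)).card < n := by
          rw [← hn]
          refine Finset.card_lt_card ?_
          constructor
          · intro k hk
            simp only [Finset.mem_filter, Finset.mem_univ, true_and] at hk ⊢
            by_cases h : k = b <;> simpa [hx', h] using hk
          · intro hsub
            have := hsub (Finset.mem_filter.mpr ⟨Finset.mem_univ b, hb⟩)
            simp [hx'] at this
        obtain ⟨S, hS, hle⟩ := ih _ hcard x' rfl
        exact ⟨S, hS, hstep.trans hle⟩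

end Aux3

/-- QUBO formulation of MWIS: if `λ_{ij} ≥ min(w_i, w_j)` on every edge, the
maximum of `Y(x) = Σ w_i x_i - Σ_{ij∈E} λ_{ij} x_i x_j` over `{0,1}^V` equals
the maximum total weight of an independent set of `G`. -/
theorem stmt4 {V : Type*} [Fintype V] [DecidableEq V]
    (G : SimpleGraph V) [DecidableRel G.Adj]
    (w : V → ℚ) (hw : ∀ i, 0 < w i)
    (lam : V → V → ℚ) (hsym : ∀ i j, lam i j = lam j i)
    (hlam : ∀ i j, G.Adj i j → min (w i) (w j) ≤ lam i j)
    (Y : (V → Bool) → ℚ)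
    (hY : ∀ x, Y x = ∑ i, w i * (if x i then 1 else 0) -
      ∑ e ∈ G.edgeFinset,
        Sym2.lift ⟨fun i j => lam i j * (if x i then 1 else 0) * (if x j then 1 else 0),
          fun i j => by simp only [hsym i j]; ring⟩ e)
    (m : ℚ) :
    IsGreatest (Set.range Y) m ↔
      IsGreatest {y | ∃ S : Finset V, (∀ i ∈ S, ∀ j ∈ S, ¬ G.Adj i j) ∧
        y = ∑ i ∈ S, w i} m := by
  have hY' : ∀ x : V → Bool, Y x = (∑ i, w i * (if x i then 1 else 0)) -
      ∑ e ∈ G.edgeFinset, qedge lam hsym x e := hY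
  -- every independent set weight is attained by Y
  have hattain : ∀ S : Finset V, (∀ i ∈ S, ∀ j ∈ S, ¬ G.Adj i j) →
      Y (fun i => decide (i ∈ S)) = ∑ i ∈ S, w i := by
    intro S hS
    have hTS : univ.filter (fun i => decide (i ∈ S) = true) = S := by
      ext i; simp
    rw [hY', Y_eval_indep G w lam hsym _ (by rw [hTS]; exact hS), hTS]
  -- every Y value is dominated by some independent set weight
  have hrep : ∀ x : V → Bool, ∃ S : Finset V, (∀ a ∈ S, ∀ b ∈ S, ¬ G.Adj a b) ∧
      Y x ≤ ∑ i ∈ S, w i := by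
    intro x
    obtain ⟨S, hS, hle⟩ := Y_repair G w lam hsym hw hlam
      (univ.filter (fun i => x i = true)).card x rfl
    exact ⟨S, hS, (hY' x) ▸ hle⟩
  constructor
  · rintro ⟨⟨x, hxY⟩, hub⟩
    obtain ⟨S, hS, hle⟩ := hrep x
    have h1 : ∑ i ∈ S, w i ≤ m := hub ⟨_, hattain S hS⟩
    have hm : m = ∑ i ∈ S, w i := le_antisymm (hxY ▸ hle) h1
    refine ⟨⟨S, hS, hm⟩, ?_⟩
    rintro y ⟨S', hS', rfl⟩
    exact hub ⟨_, hattain S' hS'⟩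
  · rintro ⟨⟨S, hS, rfl⟩, hub⟩
    refine ⟨⟨_, hattain S hS⟩, ?_⟩
    rintro y ⟨x, rfl⟩
    obtain ⟨S', hS', hle⟩ := hrep x
    exact hle.trans (hub ⟨S', hS', rfl⟩)
end

section
/- Let G be a finite undirected graph with positive vertex weights w, and suppose λ_{ij} > min(w_i, w_j) for every edge ij. If x* maximizes Y(x) = Σ_i w_i x_i − Σ_{ij ∈ E} λ_{ij} x_i x_j over {0,1}^V, then the set S = {i : x*_i = 1} is an independent set of G of maximum total weight. -/
/-- If `λ_{ij} > min(w_i, w_j)` on every edge and `x*` maximizes the QUBO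
objective `Y`, then `{i : x*_i = 1}` is a maximum-weight independent set. -/
theorem stmt5 {V : Type*} [Fintype V] [DecidableEq V]
    (G : SimpleGraph V) [DecidableRel G.Adj]
    (w : V → ℚ) (hw : ∀ i, 0 < w i)
    (lam : V → V → ℚ) (hsym : ∀ i j, lam i j = lam j i)
    (hlam : ∀ i j, G.Adj i j → min (w i) (w j) < lam i j)
    (Y : (V → Bool) → ℚ)
    (hY : ∀ x, Y x = ∑ i, w i * (if x i then 1 else 0) -
      ∑ e ∈ G.edgeFinset,
        Sym2.lift ⟨fun i j => lam i j * (if x i then 1 else 0) * (if x j then 1 else 0),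
          fun i j => by simp only [hsym i j]; ring⟩ e)
    (xstar : V → Bool) (hmax : ∀ x, Y x ≤ Y xstar) :
    (∀ i ∈ Finset.univ.filter (fun i => xstar i = true),
      ∀ j ∈ Finset.univ.filter (fun i => xstar i = true), ¬ G.Adj i j) ∧
    ∀ S : Finset V, (∀ i ∈ S, ∀ j ∈ S, ¬ G.Adj i j) →
      ∑ i ∈ S, w i ≤ ∑ i ∈ Finset.univ.filter (fun i => xstar i = true), w i := by
  classical
  have hlam0 : ∀ i j, G.Adj i j → 0 < lam i j := fun i j h =>
    lt_trans (lt_min (hw i) (hw j)) (hlam i j h)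
  -- helper: flipping a true vertex i adjacent to a true vertex j with w i < lam i j
  -- strictly increases Y, contradiction.
  have key : ∀ i j, G.Adj i j → xstar i = true → xstar j = true →
      w i < lam i j → False := by
    intro i j hadj hi hj hwi
    set x' : V → Bool := fun k => if k = i then false else xstar k with hx'
    have hx'i : x' i = false := by simp [hx']
    have hx'ne : ∀ k, k ≠ i → x' k = xstar k := by intro k hk; simp [hx', hk]
    have hji : j ≠ i := fun h => G.irrefl (h ▸ hadj)
    -- weight sum difference
    have hws : (∑ k, w k * (if xstar k then (1:ℚ) else 0)) -
        (∑ k, w k * (if x' k then (1:ℚ) else 0)) = w i := by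
      rw [← Finset.sum_sub_distrib]
      rw [Finset.sum_eq_single i]
      · simp [hi, hx'i]
      · intro k _ hk; rw [hx'ne k hk]; ring
      · intro h; exact absurd (Finset.mem_univ i) h
    -- penalty difference
    have hpen : lam i j ≤
        (∑ e ∈ G.edgeFinset,
          Sym2.lift ⟨fun a b => lam a b * (if xstar a then (1:ℚ) else 0) * (if xstar b then 1 else 0),
            fun a b => by simp only [hsym a b]; ring⟩ e) -
        (∑ e ∈ G.edgeFinset,
          Sym2.lift ⟨fun a b => lam a b * (if x' a then (1:ℚ) else 0) * (if x' b then 1 else 0),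
            fun a b => by simp only [hsym a b]; ring⟩ e) := by
      rw [← Finset.sum_sub_distrib]
      have hmem : s(i, j) ∈ G.edgeFinset := by
        rw [SimpleGraph.mem_edgeFinset, SimpleGraph.mem_edgeSet]; exact hadj
    -- value of the flipped edge term
      have hterm : (Sym2.lift ⟨fun a b => lam a b * (if xstar a then (1:ℚ) else 0) * (if xstar b then 1 else 0),
            fun a b => by simp only [hsym a b]; ring⟩ s(i,j)) -
          (Sym2.lift ⟨fun a b => lam a b * (if x' a then (1:ℚ) else 0) * (if x' b then 1 else 0),
            fun a b => by simp only [hsym a b]; ring⟩ s(i,j)) = lam i j := by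
        simp [Sym2.lift_mk, hi, hj, hx'i, hx'ne j hji]
      calc lam i j = _ := hterm.symm
        _ ≤ _ := by
          apply Finset.single_le_sum (f := fun e => _ - _) _ hmem
          intro e he
          induction e using Sym2.ind with
          | _ a b =>
            have hab : G.Adj a b := by
              rwa [SimpleGraph.mem_edgeFinset, SimpleGraph.mem_edgeSet] at he
            simp only [Sym2.lift_mk, sub_nonneg]
            have hl : 0 < lam a b := hlam0 a b hab
            have mono : ∀ k, (if x' k then (1:ℚ) else 0) ≤ (if xstar k then 1 else 0) := by
              intro k
              by_cases hk : k = i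
              · subst hk; simp [hi, hx'i]
              · rw [hx'ne k hk]
            have nn : ∀ k, (0:ℚ) ≤ (if x' k then 1 else 0) := by
              intro k; positivity
            have nns : ∀ k, (0:ℚ) ≤ (if xstar k then 1 else 0) := by
              intro k; positivity
            have h1 : lam a b * (if x' a then (1:ℚ) else 0) ≤ lam a b * (if xstar a then 1 else 0) :=
              mul_le_mul_of_nonneg_left (mono a) hl.le
            exact mul_le_mul h1 (mono b) (nn b) (mul_nonneg hl.le (nns a))
    have : Y xstar < Y x' := by
      rw [hY xstar, hY x']
      have := hmax x'
      linarith [hws, hpen, hwi]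
    exact absurd (hmax x') (not_le.mpr this)
  -- independence of the support of xstar
  have hind : ∀ i ∈ Finset.univ.filter (fun i => xstar i = true),
      ∀ j ∈ Finset.univ.filter (fun i => xstar i = true), ¬ G.Adj i j := by
    intro i hi j hj hadj
    simp only [Finset.mem_filter] at hi hj
    rcases min_cases (w i) (w j) with ⟨hmin, _⟩ | ⟨hmin, _⟩
    · exact key i j hadj hi.2 hj.2 (hmin ▸ hlam i j hadj)
    · exact key j i hadj.symm hj.2 hi.2 (by rw [hsym j i]; exact hmin ▸ hlam i j hadj)
  refine ⟨hind, ?_⟩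
  -- general fact: if the support of x is independent, Y x is its weight
  have hval : ∀ x : V → Bool, (∀ i j, G.Adj i j → ¬(x i = true ∧ x j = true)) →
      Y x = ∑ i ∈ Finset.univ.filter (fun i => x i = true), w i := by
    intro x hx
    rw [hY x]
    have hz : (∑ e ∈ G.edgeFinset,
        Sym2.lift ⟨fun a b => lam a b * (if x a then (1:ℚ) else 0) * (if x b then 1 else 0),
          fun a b => by simp only [hsym a b]; ring⟩ e) = 0 := by
      apply Finset.sum_eq_zero
      intro e he
      induction e using Sym2.ind with
      | _ a b =>
        have hab : G.Adj a b := by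
          rwa [SimpleGraph.mem_edgeFinset, SimpleGraph.mem_edgeSet] at he
        have := hx a b hab
        simp only [Sym2.lift_mk]
        rcases Bool.eq_false_or_eq_true (x a) with h | h
        · rcases Bool.eq_false_or_eq_true (x b) with h2 | h2
          · exact absurd ⟨h, h2⟩ this
          · simp [h2]
        · simp [h]
    rw [hz, sub_zero, Finset.sum_filter]
    apply Finset.sum_congr rfl
    intro k _
    by_cases h : x k <;> simp [h]
  intro S hS
  set xS : V → Bool := fun k => decide (k ∈ S) with hxS
  have hfil : Finset.univ.filter (fun i => xS i = true) = S := by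
    ext k; simp [hxS]
  have hYS : Y xS = ∑ i ∈ S, w i := by
    rw [hval xS, hfil]
    intro a b hab ⟨ha, hb⟩
    exact hS a (by simpa [hxS] using ha) b (by simpa [hxS] using hb) hab
  have hYstar : Y xstar = ∑ i ∈ Finset.univ.filter (fun i => xstar i = true), w i := by
    apply hval
    intro a b hab ⟨ha, hb⟩
    exact hind a (by simp [ha]) b (by simp [hb]) hab
  calc ∑ i ∈ S, w i = Y xS := hYS.symm
    _ ≤ Y xstar := hmax xS
    _ = _ := hYstar
end

section
/- Suppose real sequences c(λ), d(λ) satisfy c(λ) = c₀ − λ·K·d₀ and d(λ) = d₀ + λ·K·c₀ for all λ ∈ [−δ, δ], with K > 0, δ > 0. If |c(λ)| is strictly decreasing and |d(λ)| is strictly increasing on [−δ, δ], then c₀·d₀ > 0. -/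
/-- "Same sign" property (C3): if `c(λ) = c₀ - λKd₀` and `d(λ) = d₀ + λKc₀`
with `K, δ > 0`, and `|c|` is strictly decreasing while `|d|` is strictly
increasing on `[-δ, δ]`, then `c₀ d₀ > 0`. -/
theorem stmt9 (c d : ℝ → ℝ) (c₀ d₀ K δ : ℝ) (hK : 0 < K) (hδ : 0 < δ)
    (hc : ∀ lam ∈ Set.Icc (-δ) δ, c lam = c₀ - lam * K * d₀)
    (hd : ∀ lam ∈ Set.Icc (-δ) δ, d lam = d₀ + lam * K * c₀)
    (hcdec : StrictAntiOn (fun lam => |c lam|) (Set.Icc (-δ) δ))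
    (hdinc : StrictMonoOn (fun lam => |d lam|) (Set.Icc (-δ) δ)) :
    0 < c₀ * d₀ := by
  have h0 : (0:ℝ) ∈ Set.Icc (-δ) δ := ⟨by linarith, by linarith⟩
  have hδm : δ ∈ Set.Icc (-δ) δ := ⟨by linarith, le_refl _⟩
  have h := hcdec h0 hδm hδ
  simp only [hc 0 h0, hc δ hδm] at h
  have h2 : (c₀ - δ * K * d₀)^2 < (c₀ - 0 * K * d₀)^2 := by
    have := pow_lt_pow_left₀ h (abs_nonneg _) (n := 2) (by norm_num)
    simpa [sq_abs] using this
  have hd0 : d₀ ≠ 0 := by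
    intro hd0
    simp [hd0] at h2
  have hKδ : 0 < δ * K := mul_pos hδ hK
  nlinarith [sq_nonneg d₀, mul_pos hKδ (mul_self_pos.mpr hd0), sq_nonneg (δ * K * d₀)]
end
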